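/- With the setup of the restricted Newton direction, δ ≤ −(1/‖X‖₂²)·‖D*‖_F², where ‖X‖₂ is the spectral norm and ‖D*‖_F the Frobenius norm. In particular δ < 0 whenever D* ≠ 0. -/

import Mathlib

open Matrix BigOperators Kronecker

/-- Vectorization of a matrix, as a function on index pairs. -/
def mvec {p : ℕ} (D : Matrix (Fin p) (Fin p) ℝ) : Fin p × Fin p → ℝ :=
  fun ij => D ij.1 ij.2

/-- With `∇²g(X) = X⁻¹ ⊗ X⁻¹` and
`δ ≤ −vec(D*)ᵀ ∇²g(X) vec(D*)`, we get `δ ≤ −(1/‖X‖₂²)·‖D*‖_F²`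
(where `‖X‖₂` is the largest eigenvalue of `X ≻ 0` and `‖D*‖_F² = Σᵢⱼ D*ᵢⱼ²`);
in particular `δ < 0` whenever `D* ≠ 0`. -/
theorem delta_le_neg_frobenius {p : ℕ} (X D : Matrix (Fin p) (Fin p) ℝ)
    (hX : X.PosDef) (δ : ℝ)
    (hδ : δ ≤ -(mvec D ⬝ᵥ ((X⁻¹ ⊗ₖ X⁻¹) *ᵥ mvec D))) :
    δ ≤ -(1 / (⨆ i, hX.1.eigenvalues i) ^ 2) * ∑ i, ∑ j, (D i j) ^ 2 ∧
      (D ≠ 0 → δ < 0) := by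
  classical
  rcases Nat.eq_zero_or_pos p with hp | hp
  · subst hp
    refine ⟨?_, fun hD => absurd (by ext i j; exact i.elim0) hD⟩
    simpa [mvec, dotProduct] using hδ
  haveI : Nonempty (Fin p) := ⟨⟨0, hp⟩⟩
  set μ := hX.1.eigenvalues with hμdef
  set lam := ⨆ i, μ i with hlamdef
  have hμpos : ∀ i, 0 < μ i := hX.eigenvalues_pos
  have hbdd : BddAbove (Set.range μ) := (Set.finite_range μ).bddAbove
  have hle : ∀ i, μ i ≤ lam := fun i => le_ciSup hbdd i
  have hlampos : 0 < lam := lt_of_lt_of_le (hμpos (Classical.arbitrary _)) (hle _)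
  set c := lam⁻¹ with hcdef
  have hcpos : 0 < c := inv_pos.mpr hlampos
  have hcle : ∀ i, c ≤ (μ i)⁻¹ := fun i => by
    have := (hμpos i)
    exact inv_anti₀ this (hle i)
  set W : Matrix (Fin p) (Fin p) ℝ := (hX.1.eigenvectorUnitary : Matrix (Fin p) (Fin p) ℝ) with hWdef
  have hW1 : W * Wᵀ = 1 := by
    have h := (Matrix.mem_unitaryGroup_iff).mp hX.1.eigenvectorUnitary.2
    rwa [Matrix.star_eq_conjTranspose, Matrix.conjTranspose_eq_transpose_of_trivial] at h
  have hW2 : Wᵀ * W = 1 := by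
    have h := (Matrix.mem_unitaryGroup_iff').mp hX.1.eigenvectorUnitary.2
    rwa [Matrix.star_eq_conjTranspose, Matrix.conjTranspose_eq_transpose_of_trivial] at h
  have hspec : X = W * Matrix.diagonal μ * Wᵀ := by
    have h := hX.1.spectral_theorem
    rwa [Unitary.conjStarAlgAut_apply, Matrix.star_eq_conjTranspose, Matrix.conjTranspose_eq_transpose_of_trivial,
      show (RCLike.ofReal ∘ μ : Fin p → ℝ) = μ by ext i; simp] at h
  have hXinv : X⁻¹ = W * Matrix.diagonal (fun i => (μ i)⁻¹) * Wᵀ := by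
    apply Matrix.inv_eq_right_inv
    rw [hspec]
    calc W * Matrix.diagonal μ * Wᵀ * (W * Matrix.diagonal (fun i => (μ i)⁻¹) * Wᵀ)
        = W * Matrix.diagonal μ * (Wᵀ * W) * Matrix.diagonal (fun i => (μ i)⁻¹) * Wᵀ := by
          noncomm_ring
      _ = W * (Matrix.diagonal μ * Matrix.diagonal (fun i => (μ i)⁻¹)) * Wᵀ := by
          rw [hW2]; noncomm_ring
      _ = 1 := by
          rw [Matrix.diagonal_mul_diagonal,
            show (fun i => μ i * (μ i)⁻¹) = fun _ : Fin p => (1 : ℝ) from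
              funext fun i => mul_inv_cancel₀ (hμpos i).ne',
            Matrix.diagonal_one, mul_one, hW1]
  set V : Matrix (Fin p × Fin p) (Fin p × Fin p) ℝ := W ⊗ₖ W with hVdef
  set Λ2 : Matrix (Fin p × Fin p) (Fin p × Fin p) ℝ :=
    Matrix.diagonal (fun ab => (μ ab.1)⁻¹ * (μ ab.2)⁻¹) with hΛdef
  have hVT : Vᵀ = Wᵀ ⊗ₖ Wᵀ := (Matrix.kroneckerMap_transpose _ _ _).symm
  have hK : X⁻¹ ⊗ₖ X⁻¹ = V * Λ2 * Vᵀ := by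
    rw [hXinv, hVT, hVdef, hΛdef, Matrix.mul_kronecker_mul, Matrix.mul_kronecker_mul,
      Matrix.diagonal_kronecker_diagonal]
  have hVV : V * Vᵀ = 1 := by
    rw [hVT, hVdef, ← Matrix.mul_kronecker_mul, hW1, Matrix.one_kronecker_one]
  set v := mvec D with hvdef
  set w := Vᵀ *ᵥ v with hwdef
  have hQ : v ⬝ᵥ ((X⁻¹ ⊗ₖ X⁻¹) *ᵥ v)
      = ∑ ab : Fin p × Fin p, ((μ ab.1)⁻¹ * (μ ab.2)⁻¹) * (w ab) ^ 2 := by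
    rw [hK, Matrix.mul_assoc, ← Matrix.mulVec_mulVec, Matrix.dotProduct_mulVec,
      ← Matrix.mulVec_transpose, ← Matrix.mulVec_mulVec, ← hwdef]
    simp only [dotProduct, Matrix.mulVec_diagonal, hΛdef]
    exact Finset.sum_congr rfl fun ab _ => by ring
  have hww : w ⬝ᵥ w = v ⬝ᵥ v := by
    rw [hwdef, Matrix.dotProduct_mulVec, Matrix.vecMul_transpose, Matrix.mulVec_mulVec, hVV,
      Matrix.one_mulVec]
  have hvv : v ⬝ᵥ v = ∑ i, ∑ j, (D i j) ^ 2 := by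
    simp [dotProduct, hvdef, mvec, Fintype.sum_prod_type, pow_two]
  have hlower : c ^ 2 * (v ⬝ᵥ v) ≤ v ⬝ᵥ ((X⁻¹ ⊗ₖ X⁻¹) *ᵥ v) := by
    rw [hQ, ← hww, dotProduct, Finset.mul_sum]
    refine Finset.sum_le_sum fun ab _ => ?_
    have h1 := hcle ab.1
    have h2 := hcle ab.2
    have h3 : c * c ≤ (μ ab.1)⁻¹ * (μ ab.2)⁻¹ :=
      mul_le_mul h1 h2 hcpos.le (hcpos.le.trans h1)
    nlinarith [sq_nonneg (w ab)]
  have hmain : δ ≤ -(1 / lam ^ 2) * ∑ i, ∑ j, (D i j) ^ 2 := by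
    have : -(v ⬝ᵥ ((X⁻¹ ⊗ₖ X⁻¹) *ᵥ v)) ≤ -(c ^ 2 * (v ⬝ᵥ v)) := neg_le_neg hlower
    calc δ ≤ -(v ⬝ᵥ ((X⁻¹ ⊗ₖ X⁻¹) *ᵥ v)) := hδ
      _ ≤ -(c ^ 2 * (v ⬝ᵥ v)) := this
      _ = -(1 / lam ^ 2) * ∑ i, ∑ j, (D i j) ^ 2 := by
          rw [hvv, hcdef]; rw [one_div, ← inv_pow]; ring
  refine ⟨hmain, fun hD => ?_⟩
  have hS : 0 < ∑ i, ∑ j, (D i j) ^ 2 := by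
    obtain ⟨i, j, hij⟩ : ∃ i j, D i j ≠ 0 := by
      by_contra h
      push_neg at h
      exact hD (by ext i j; simp [h])
    have hpos : 0 < (D i j) ^ 2 := by positivity
    refine Finset.sum_pos' (fun a _ => Finset.sum_nonneg fun b _ => sq_nonneg _) ⟨i, Finset.mem_univ i, ?_⟩
    exact Finset.sum_pos' (fun b _ => sq_nonneg _) ⟨j, Finset.mem_univ j, hpos⟩
  have hcoef : 0 < 1 / lam ^ 2 := by positivity
  calc δ ≤ -(1 / lam ^ 2) * ∑ i, ∑ j, (D i j) ^ 2 := hmain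
    _ < 0 := by nlinarith
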